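/- The generating function of m-labeled unranked trees that contain a fixed m-labeled unranked tree u of size p as a subtree is C(z) = (z^{p+1} + √(1 − 4mz + 2z^{p+1} + z^{2p+2}) − √(1 − 4mz))/(2z), as an identity of formal power series. -/

import Mathlib

inductive UTree (σ : Type) : Type where
  | node : σ → List (UTree σ) → UTree σ

namespace UTree
variable {σ : Type}

noncomputable instance : DecidableEq (UTree σ) := Classical.decEq _

def children : UTree σ → List (UTree σ)
  | node _ cs => cs

def subs : UTree σ → List (UTree σ)
  | node a cs => node a cs :: (cs.attach.map (fun ⟨c, _⟩ => subs c)).flatten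

def sibs : UTree σ → List (List (UTree σ))
  | node _ cs => cs.tails.filter (fun l => !l.isEmpty)
      ++ (cs.attach.map (fun ⟨c, _⟩ => sibs c)).flatten

def sibseqs (t : UTree σ) : List (List (UTree σ)) := [t] :: sibs t

def edges : UTree σ → ℕ
  | node _ cs => cs.length + (cs.attach.map (fun ⟨c, _⟩ => edges c)).sum

def rootDeg : UTree σ → ℕ
  | node _ cs => cs.length

def nodes : UTree σ → ℕ
  | node _ cs => 1 + (cs.attach.map (fun ⟨c, _⟩ => nodes c)).sum

end UTree

namespace UTree
variable {σ : Type}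

@[simp] lemma subs_node (a : σ) (cs : List (UTree σ)) :
    subs (node a cs) = node a cs :: (cs.map subs).flatten := by
  rw [subs]
  congr 1
  congr 1
  exact List.attach_map_val

@[simp] lemma edges_node (a : σ) (cs : List (UTree σ)) :
    edges (node a cs) = cs.length + (cs.map edges).sum := by
  rw [edges]
  congr 2
  exact List.attach_map_val

@[simp] lemma children_node (a : σ) (cs : List (UTree σ)) :
    children (node a cs) = cs := rfl

lemma edges_lt_of_mem {c : UTree σ} {cs : List (UTree σ)} (h : c ∈ cs) (a : σ) :
    edges c < edges (node a cs) := by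
  have h1 : edges c ≤ (cs.map edges).sum :=
    List.single_le_sum (fun _ _ => Nat.zero_le _) _ (List.mem_map_of_mem (f := edges) h)
  have h2 : 0 < cs.length := List.length_pos_iff.2 (List.ne_nil_of_mem h)
  rw [edges_node]; omega

lemma self_mem_subs (t : UTree σ) : t ∈ subs t := by
  cases t with | node a cs => simp

end UTree

namespace UTree

lemma mem_subs_of_child {s c : UTree σ} {cs : List (UTree σ)} (hc : c ∈ cs) (a : σ)
    (hs : s ∈ subs c) : s ∈ subs (node a cs) := by
  rw [subs_node]
  exact List.mem_cons_of_mem _ (List.mem_flatten.2 ⟨subs c, List.mem_map_of_mem (f := subs) hc, hs⟩)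

lemma mem_subs_elim {s : UTree σ} {a : σ} {cs : List (UTree σ)}
    (h : s ∈ subs (node a cs)) : s = node a cs ∨ ∃ c ∈ cs, s ∈ subs c := by
  rw [subs_node, List.mem_cons] at h
  rcases h with h | h
  · exact Or.inl h
  · obtain ⟨l, hl, hsl⟩ := List.mem_flatten.1 h
    obtain ⟨c, hc, rfl⟩ := List.mem_map.1 hl
    exact Or.inr ⟨c, hc, hsl⟩

lemma edges_le_of_mem_subs_aux : ∀ (n : ℕ) (t : UTree σ), edges t = n →
    ∀ s ∈ subs t, edges s ≤ edges t := by
  intro n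
  induction n using Nat.strong_induction_on with
  | _ n ih =>
    rintro t rfl s hs
    cases t with
    | node a cs =>
      rcases mem_subs_elim hs with rfl | ⟨c, hc, hsc⟩
      · exact le_rfl
      · have h1 : edges c < edges (node a cs) := edges_lt_of_mem hc a
        exact le_trans (ih _ h1 c rfl s hsc) h1.le

lemma edges_le_of_mem_subs {s t : UTree σ} (h : s ∈ subs t) : edges s ≤ edges t :=
  edges_le_of_mem_subs_aux (edges t) t rfl s h

lemma eq_nil_of_edges_eq_zero {a : σ} {cs : List (UTree σ)}
    (h : edges (node a cs) = 0) : cs = [] := by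
  rw [edges_node] at h
  exact List.length_eq_zero_iff.1 (by omega)

lemma map_val_attach_eq {α β : Type*} {cs1 cs2 : List α} {f1 : {x // x ∈ cs1} → β}
    {f2 : {x // x ∈ cs2} → β} (v : β → α) (hv1 : ∀ c, v (f1 c) = c.1)
    (hv2 : ∀ c, v (f2 c) = c.1) (h : cs1.attach.map f1 = cs2.attach.map f2) : cs1 = cs2 := by
  have h' := congrArg (List.map v) h
  rwa [List.map_map, List.map_map, show v ∘ f1 = Subtype.val from funext hv1,
    show v ∘ f2 = Subtype.val from funext hv2, List.attach_map_subtype_val,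
    List.attach_map_subtype_val] at h'

lemma finite_edges_le (σ : Type) [Finite σ] : ∀ n, Finite {t : UTree σ // edges t ≤ n} := by
  intro n
  induction n with
  | zero =>
    refine Finite.of_injective (fun t : {t : UTree σ // edges t ≤ 0} =>
      match t with | ⟨node a _, _⟩ => a) ?_
    rintro ⟨⟨a1, cs1⟩, h1⟩ ⟨⟨a2, cs2⟩, h2⟩ h
    simp only at h
    have e1 : cs1 = [] := eq_nil_of_edges_eq_zero (Nat.le_zero.1 h1)
    have e2 : cs2 = [] := eq_nil_of_edges_eq_zero (Nat.le_zero.1 h2)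
    subst e1; subst e2; subst h; rfl
  | succ n ihn =>
    haveI : Finite {l : List {t : UTree σ // edges t ≤ n} // l.length ≤ n + 1} := by
      have := (List.finite_length_le {t : UTree σ // edges t ≤ n} (n + 1)).to_subtype
      exact this
    refine Finite.of_injective (fun t : {t : UTree σ // edges t ≤ n + 1} =>
      match t with
      | ⟨node a cs, h⟩ =>
        ((a, ⟨cs.attach.map (fun (c : {x // x ∈ cs}) => ⟨c.1, by
            have := edges_lt_of_mem c.2 a; omega⟩), by
            have h2 : cs.length ≤ edges (node a cs) := by rw [edges_node]; omega
            simpa using le_trans h2 h⟩) :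
          σ × {l : List {t : UTree σ // edges t ≤ n} // l.length ≤ n + 1})) ?_
    rintro ⟨⟨a1, cs1⟩, h1⟩ ⟨⟨a2, cs2⟩, h2⟩ h
    simp only [Prod.mk.injEq, Subtype.mk.injEq] at h
    obtain ⟨rfl, hl⟩ := h
    have : cs1 = cs2 := by
      refine map_val_attach_eq Subtype.val ?_ ?_ hl <;> exact fun _ => rfl
    subst this; rfl

end UTree

lemma natCard_sigma {ι : Type*} [Fintype ι] {α : ι → Type*} [∀ i, Finite (α i)] :
    Nat.card (Σ i, α i) = ∑ i, Nat.card (α i) := by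
  letI := fun i => Fintype.ofFinite (α i)
  simp [Nat.card_eq_fintype_card, Fintype.card_sigma]

namespace UTree

variable {σ : Type} [Finite σ]

instance finite_sub (n : ℕ) (P : UTree σ → Prop) :
    Finite {t : UTree σ // edges t = n ∧ P t} := by
  haveI := finite_edges_le σ n
  exact Finite.of_injective
    (fun x : {t : UTree σ // edges t = n ∧ P t} => (⟨x.1, x.2.1.le⟩ : {t // edges t ≤ n}))
    (by rintro ⟨t1, h1⟩ ⟨t2, h2⟩ h; simpa [Subtype.ext_iff] using h)

def glue : UTree σ × UTree σ → UTree σ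
  | (c, node a cs) => node a (c :: cs)

def dest : UTree σ → UTree σ × UTree σ
  | node a [] => (node a [], node a [])
  | node a (c :: cs) => (c, node a cs)

omit [Finite σ] in
lemma card_zero (Q : UTree σ → Prop) (hQ : ∀ a : σ, Q (node a [])) :
    Nat.card {t : UTree σ // edges t = 0 ∧ Q t} = Nat.card σ := by
  apply Nat.card_congr
  refine ⟨fun x => match x with | ⟨node a _, _⟩ => a,
    fun a => ⟨node a [], by simp, hQ a⟩, ?_, fun a => rfl⟩
  rintro ⟨⟨a, cs⟩, h, hq⟩
  have : cs = [] := eq_nil_of_edges_eq_zero h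
  subst this; rfl

lemma card_pairs (R1 R2 : UTree σ → Prop) (n : ℕ) :
    Nat.card {x : UTree σ × UTree σ // edges x.1 + edges x.2 = n ∧ R1 x.1 ∧ R2 x.2} =
      ∑ ij ∈ Finset.HasAntidiagonal.antidiagonal n,
        Nat.card {t : UTree σ // edges t = ij.1 ∧ R1 t} *
          Nat.card {t : UTree σ // edges t = ij.2 ∧ R2 t} := by
  have E : {x : UTree σ × UTree σ // edges x.1 + edges x.2 = n ∧ R1 x.1 ∧ R2 x.2} ≃
      Σ ij : (Finset.HasAntidiagonal.antidiagonal n : Finset (ℕ × ℕ)),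
        {t : UTree σ // edges t = (ij : ℕ × ℕ).1 ∧ R1 t} ×
          {t : UTree σ // edges t = (ij : ℕ × ℕ).2 ∧ R2 t} := by
    refine ⟨fun x => ⟨⟨(edges x.1.1, edges x.1.2), Finset.HasAntidiagonal.mem_antidiagonal.2 x.2.1⟩,
        ⟨x.1.1, rfl, x.2.2.1⟩, ⟨x.1.2, rfl, x.2.2.2⟩⟩,
      fun y => ⟨(y.2.1.1, y.2.2.1), ?_, y.2.1.2.2, y.2.2.2.2⟩, fun x => rfl, ?_⟩
    · rw [y.2.1.2.1, y.2.2.2.1]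
      exact Finset.HasAntidiagonal.mem_antidiagonal.1 y.1.2
    · rintro ⟨⟨⟨i, j⟩, hij⟩, ⟨c, hc1, hc2⟩, ⟨d, hd1, hd2⟩⟩
      obtain rfl : edges c = i := hc1
      obtain rfl : edges d = j := hd1
      rfl
  rw [Nat.card_congr E, natCard_sigma, ← Finset.sum_coe_sort (Finset.HasAntidiagonal.antidiagonal n)
    (fun ij => Nat.card {t : UTree σ // edges t = ij.1 ∧ R1 t} *
      Nat.card {t : UTree σ // edges t = ij.2 ∧ R2 t})]
  exact Finset.sum_congr rfl fun ij _ => (Nat.card_prod _ _)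

lemma card_succ (P Q : UTree σ → Prop)
    (hPQ : ∀ (a : σ) (c : UTree σ) (cs : List (UTree σ)),
      Q (node a (c :: cs)) ↔ P c ∧ Q (node a cs)) (n : ℕ) :
    Nat.card {t : UTree σ // edges t = n + 1 ∧ Q t} =
      ∑ ij ∈ Finset.HasAntidiagonal.antidiagonal n,
        Nat.card {t : UTree σ // edges t = ij.1 ∧ P t} *
          Nat.card {t : UTree σ // edges t = ij.2 ∧ Q t} := by
  rw [← card_pairs]
  apply Nat.card_congr
  refine ⟨fun x => ⟨dest x.1, ?_⟩, fun y => ⟨glue y.1, ?_⟩, ?_, ?_⟩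
  · obtain ⟨t, h⟩ := x
    cases t with
    | node a cs =>
      cases cs with
      | nil =>
        exfalso
        have := h.1
        rw [edges_node] at this
        simp at this
      | cons c cs =>
        have he := h.1
        rw [edges_node] at he
        simp only [List.length_cons, List.map_cons, List.sum_cons] at he
        refine ⟨?_, ((hPQ a c cs).1 h.2).1, ((hPQ a c cs).1 h.2).2⟩
        show edges c + edges (node a cs) = n
        rw [edges_node]
        omega
  · obtain ⟨⟨c, t⟩, h⟩ := y
    cases t with
    | node a cs =>
      constructor
      · show edges (node a (c :: cs)) = n + 1
        rw [edges_node]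
        simp only [List.length_cons, List.map_cons, List.sum_cons]
        have h1 : edges c + edges (node a cs) = n := h.1
        rw [edges_node] at h1
        omega
      · exact (hPQ a c cs).2 ⟨h.2.1, h.2.2⟩
  · rintro ⟨t, h⟩
    cases t with
    | node a cs =>
      cases cs with
      | nil =>
        exfalso
        have := h.1
        rw [edges_node] at this
        simp at this
      | cons c cs => exact Subtype.ext rfl
  · rintro ⟨⟨c, t⟩, h⟩
    cases t with
    | node a cs => exact Subtype.ext rfl

end UTree

namespace UTree

variable {σ : Type} [Finite σ]

lemma card_split (Q : UTree σ → Prop) (u : UTree σ) (n : ℕ) :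
    Nat.card {t : UTree σ // edges t = n ∧ Q t} =
      Nat.card {t : UTree σ // edges t = n ∧ Q t ∧ u ∈ subs t} +
        Nat.card {t : UTree σ // edges t = n ∧ Q t ∧ u ∉ subs t} := by
  classical
  rw [← Nat.card_sum]
  apply Nat.card_congr
  refine ⟨fun x => if h : u ∈ subs x.1 then Sum.inl ⟨x.1, x.2.1, x.2.2, h⟩
      else Sum.inr ⟨x.1, x.2.1, x.2.2, h⟩,
    Sum.elim (fun x => ⟨x.1, x.2.1, x.2.2.1⟩) (fun x => ⟨x.1, x.2.1, x.2.2.1⟩), ?_, ?_⟩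
  · rintro ⟨t, h1, h2⟩
    by_cases h : u ∈ subs t <;> simp [h]
  · rintro (⟨t, h1, h2, h3⟩ | ⟨t, h1, h2, h3⟩) <;> simp [h3]

omit [Finite σ] in
lemma childAvoid_self (u : UTree σ) : ∀ c ∈ children u, u ∉ subs c := by
  cases u with
  | node a cs =>
    intro c hc hmem
    have h1 := edges_le_of_mem_subs hmem
    have h2 := edges_lt_of_mem (show c ∈ cs from hc) a
    omega

omit [Finite σ] in
lemma eq_of_childAvoid_mem {u t : UTree σ} (hCA : ∀ c ∈ children t, u ∉ subs c)
    (hm : u ∈ subs t) : u = t := by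
  cases t with
  | node a cs =>
    rcases mem_subs_elim hm with h | ⟨c, hc, hsc⟩
    · exact h
    · exact absurd hsc (hCA c hc)

omit [Finite σ] in
lemma avoid_imp_childAvoid {u t : UTree σ} (h : u ∉ subs t) :
    ∀ c ∈ children t, u ∉ subs c := by
  cases t with
  | node a cs =>
    intro c hc hm
    exact h (mem_subs_of_child hc a hm)

lemma card_CA_mem (u : UTree σ) (n : ℕ) :
    Nat.card {t : UTree σ // edges t = n ∧ (∀ c ∈ children t, u ∉ subs c) ∧ u ∈ subs t} =
      if n = edges u then 1 else 0 := by
  split_ifs with h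
  · subst h
    haveI : Nonempty {t : UTree σ //
        edges t = edges u ∧ (∀ c ∈ children t, u ∉ subs c) ∧ u ∈ subs t} :=
      ⟨⟨u, rfl, childAvoid_self u, self_mem_subs u⟩⟩
    haveI : Subsingleton {t : UTree σ //
        edges t = edges u ∧ (∀ c ∈ children t, u ∉ subs c) ∧ u ∈ subs t} := by
      constructor
      rintro ⟨t1, h1, hc1, hm1⟩ ⟨t2, h2, hc2, hm2⟩
      have e1 := eq_of_childAvoid_mem hc1 hm1
      have e2 := eq_of_childAvoid_mem hc2 hm2
      exact Subtype.ext (e1.symm.trans e2)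
    exact Nat.card_unique
  · haveI : IsEmpty {t : UTree σ //
        edges t = n ∧ (∀ c ∈ children t, u ∉ subs c) ∧ u ∈ subs t} := by
      constructor
      rintro ⟨t, ht, hc, hm⟩
      exact h (by rw [← ht, ← eq_of_childAvoid_mem hc hm])
    exact Nat.card_of_isEmpty

end UTree

open PowerSeries

theorem gf_unranked_containing (m p : ℕ) (u : UTree (Fin m)) (hu : UTree.edges u = p) :
    ∃ S S0 : PowerSeries ℚ,
      S ^ 2 = 1 - 4 * C (m : ℚ) * X + 2 * X ^ (p + 1) + X ^ (2 * p + 2) ∧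
      constantCoeff S = 1 ∧
      S0 ^ 2 = 1 - 4 * C (m : ℚ) * X ∧
      constantCoeff S0 = 1 ∧
      2 * X *
          (mk fun n =>
            (Nat.card {t : UTree (Fin m) // UTree.edges t = n ∧ u ∈ UTree.subs t} : ℚ)) =
        X ^ (p + 1) + S - S0 := by
  classical
  set Tq : PowerSeries ℚ :=
    mk fun n => (Nat.card {t : UTree (Fin m) // UTree.edges t = n ∧ True} : ℚ) with hTq
  set Aq : PowerSeries ℚ :=
    mk fun n => (Nat.card {t : UTree (Fin m) // UTree.edges t = n ∧ u ∉ UTree.subs t} : ℚ)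
    with hAq
  set Bq : PowerSeries ℚ :=
    mk fun n => (Nat.card {t : UTree (Fin m) //
      UTree.edges t = n ∧ ∀ c ∈ UTree.children t, u ∉ UTree.subs c} : ℚ) with hBq
  set Cq : PowerSeries ℚ :=
    mk fun n => (Nat.card {t : UTree (Fin m) // UTree.edges t = n ∧ u ∈ UTree.subs t} : ℚ)
    with hCq
  -- functional equation for T
  have e1 : Tq = C (m : ℚ) + X * (Tq * Tq) := by
    ext n
    cases n with
    | zero =>
      simp only [hTq, coeff_mk, map_add, coeff_zero_eq_constantCoeff, constantCoeff_C,
        map_mul, constantCoeff_X, zero_mul, add_zero]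
      rw [UTree.card_zero (fun _ => True) (fun _ => trivial)]
      simp
    | succ n =>
      rw [map_add, coeff_succ_X_mul, coeff_C, if_neg (Nat.succ_ne_zero n), coeff_mul]
      simp only [hTq, coeff_mk]
      rw [UTree.card_succ (fun _ => True) (fun _ => True) (by intro a c cs; simp) n]
      push_cast
      simp
  -- functional equation for B
  have e2 : Bq = C (m : ℚ) + X * (Aq * Bq) := by
    ext n
    cases n with
    | zero =>
      simp only [hBq, coeff_mk, map_add, coeff_zero_eq_constantCoeff, constantCoeff_C,
        map_mul, constantCoeff_X, zero_mul, add_zero]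
      rw [UTree.card_zero (fun t => ∀ c ∈ UTree.children t, u ∉ UTree.subs c)
        (fun a => by simp)]
      simp
    | succ n =>
      rw [map_add, coeff_succ_X_mul, coeff_C, if_neg (Nat.succ_ne_zero n), coeff_mul]
      simp only [hAq, hBq, coeff_mk]
      rw [UTree.card_succ (fun t => u ∉ UTree.subs t)
        (fun t => ∀ c ∈ UTree.children t, u ∉ UTree.subs c)
        (by intro a c cs; simp [List.forall_mem_cons]) n]
      push_cast
      simp
  -- B = A + X^p
  have e3 : Bq = Aq + X ^ p := by
    ext n
    rw [map_add, coeff_X_pow]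
    simp only [hAq, hBq, coeff_mk]
    rw [UTree.card_split (fun t => ∀ c ∈ UTree.children t, u ∉ UTree.subs c) u n,
      UTree.card_CA_mem u n, hu]
    have : Nat.card {t : UTree (Fin m) //
        UTree.edges t = n ∧ (∀ c ∈ UTree.children t, u ∉ UTree.subs c) ∧ u ∉ UTree.subs t} =
        Nat.card {t : UTree (Fin m) // UTree.edges t = n ∧ u ∉ UTree.subs t} := by
      apply Nat.card_congr
      exact Equiv.subtypeEquivRight fun t =>
        ⟨fun h => ⟨h.1, h.2.2⟩, fun h => ⟨h.1, UTree.avoid_imp_childAvoid h.2, h.2⟩⟩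
    rw [this]
    push_cast
    split_ifs <;> ring
  -- T = C + A
  have e4 : Tq = Cq + Aq := by
    ext n
    rw [map_add]
    simp only [hTq, hAq, hCq, coeff_mk]
    rw [UTree.card_split (fun _ => True) u n]
    have h1 : Nat.card {t : UTree (Fin m) //
        UTree.edges t = n ∧ True ∧ u ∈ UTree.subs t} =
        Nat.card {t : UTree (Fin m) // UTree.edges t = n ∧ u ∈ UTree.subs t} :=
      Nat.card_congr (Equiv.subtypeEquivRight fun t => by tauto)
    have h2 : Nat.card {t : UTree (Fin m) //
        UTree.edges t = n ∧ True ∧ u ∉ UTree.subs t} =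
        Nat.card {t : UTree (Fin m) // UTree.edges t = n ∧ u ∉ UTree.subs t} :=
      Nat.card_congr (Equiv.subtypeEquivRight fun t => by tauto)
    rw [h1, h2]
    push_cast
    ring
  have hXp : (X : PowerSeries ℚ) ^ (p + 1) = X ^ p * X := pow_succ X p
  have hX2p : (X : PowerSeries ℚ) ^ (2 * p + 2) = X ^ (p + 1) * X ^ (p + 1) := by
    rw [← pow_add]; ring_nf
  have eA : Aq = C (m : ℚ) + X * (Aq * Aq) + X ^ (p + 1) * Aq - X ^ p := by
    have h := e2
    rw [e3] at h
    linear_combination h + Aq * hXp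
  refine ⟨1 - X ^ (p + 1) - 2 * X * Aq, 1 - 2 * X * Tq, ?_, ?_, ?_, ?_, ?_⟩
  · linear_combination (-4 * (X : PowerSeries ℚ)) * eA + hX2p + 4 * hXp
  · simp only [map_sub, map_mul, map_one, map_pow, constantCoeff_X]
    rw [zero_pow (Nat.succ_ne_zero p)]
    ring
  · linear_combination (-4 * (X : PowerSeries ℚ)) * e1
  · simp only [map_sub, map_mul, map_one, constantCoeff_X]
    ring
  · linear_combination (-2 * (X : PowerSeries ℚ)) * e4
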